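/- Let d ≥ 2, p and q₁,…,q_{d-1} real with |p| ≤ 1 and |q_r| ≤ 1, and let H_l (for l = 1,…,d) be the (d+1)×(d+1) Hermitian matrices defined by (H_l)₀₀ = 1, (H_l)_{jj} = 1, (H_l)_{0j} = (H_l)_{j0} = p, (H_l)_{jk} = q_{k-j}·exp(i·(k-j)·(2π/d)·l) for 1 ≤ j < k ≤ d. If every H_l is positive semidefinite, then p² ≤ 1/d. -/

import Mathlib

/-- The Hermitian matrix `H_l` of restrictions of the state. -/
noncomputable def Hmat (d : ℕ) (p : ℝ) (q : ℕ → ℝ) (l : ℕ) :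
    Matrix (Fin (d + 1)) (Fin (d + 1)) ℂ :=
  Matrix.of fun j k =>
    if (j : ℕ) = (k : ℕ) then 1
    else if (j : ℕ) = 0 ∨ (k : ℕ) = 0 then (p : ℂ)
    else if (j : ℕ) < (k : ℕ) then
      ((q ((k : ℕ) - (j : ℕ)) : ℝ) : ℂ) *
        Complex.exp (Complex.I * (((k : ℕ) - (j : ℕ) : ℕ) : ℂ) * (2 * Real.pi / d) * l)
    else
      ((q ((j : ℕ) - (k : ℕ)) : ℝ) : ℂ) *
        Complex.exp (-Complex.I * (((j : ℕ) - (k : ℕ) : ℕ) : ℂ) * (2 * Real.pi / d) * l)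

lemma geom_exp_sum (d m : ℕ) (hm : 0 < m) (hmd : m < d) :
    ∑ l ∈ Finset.Icc 1 d, Complex.exp (Complex.I * m * (2 * Real.pi / d) * l) = 0 := by
  have hd0 : (d:ℂ) ≠ 0 := Nat.cast_ne_zero.mpr (by omega)
  set ζ : ℂ := Complex.exp (Complex.I * m * (2 * Real.pi / d)) with hζ
  have hrw : ∀ l : ℕ, Complex.exp (Complex.I * m * (2 * Real.pi / d) * l) = ζ ^ l := by
    intro l
    rw [hζ, ← Complex.exp_nat_mul]
    ring_nf
  have hζd : ζ ^ d = 1 := by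
    rw [hζ, ← Complex.exp_nat_mul]
    have : (d:ℂ) * (Complex.I * m * (2 * Real.pi / d)) = m * (2 * Real.pi * Complex.I) := by
      field_simp
    rw [this]
    exact_mod_cast Complex.exp_int_mul_two_pi_mul_I m
  have hζ1 : ζ ≠ 1 := by
    rw [hζ, Ne, Complex.exp_eq_one_iff]
    rintro ⟨n, hn⟩
    have h2 : ((m * (2 * Real.pi / d) : ℝ) : ℂ) * Complex.I
        = ((n * (2 * Real.pi) : ℝ) : ℂ) * Complex.I := by
      push_cast
      linear_combination hn
    have h3 : (m : ℝ) * (2 * Real.pi / d) = n * (2 * Real.pi) := by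
      have := mul_right_cancel₀ Complex.I_ne_zero h2
      exact_mod_cast this
    have hpi : Real.pi ≠ 0 := Real.pi_ne_zero
    have hd0' : (d:ℝ) ≠ 0 := Nat.cast_ne_zero.mpr (by omega)
    have h4 : (m : ℝ) = n * d := by
      field_simp at h3
      have h2π : (2 * Real.pi) ≠ 0 := by positivity
      apply mul_right_cancel₀ h2π
      linear_combination (2 * Real.pi) * h3
    have h5 : (m : ℤ) = n * d := by exact_mod_cast h4
    rcases lt_or_ge n 1 with h | h
    · have : n ≤ 0 := by omega
      nlinarith [h5, hm, hmd]
    · nlinarith [h5, hmd]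
  calc ∑ l ∈ Finset.Icc 1 d, Complex.exp (Complex.I * m * (2 * Real.pi / d) * l)
      = ∑ l ∈ Finset.Icc 1 d, ζ ^ l := by simp only [hrw]
    _ = ∑ i ∈ Finset.range d, ζ ^ (1 + i) := by
        rw [← Finset.Ico_add_one_right_eq_Icc, Finset.sum_Ico_eq_sum_range]
        simp
    _ = ζ * ∑ i ∈ Finset.range d, ζ ^ i := by
        rw [Finset.mul_sum]; congr 1; ext i; rw [pow_add, pow_one]
    _ = 0 := by rw [geom_sum_eq hζ1, hζd]; simp

lemma geom_exp_sum' (d m : ℕ) (hm : 0 < m) (hmd : m < d) :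
    ∑ l ∈ Finset.Icc 1 d, Complex.exp (-Complex.I * m * (2 * Real.pi / d) * l) = 0 := by
  have h := geom_exp_sum d m hm hmd
  have hc : ∀ l : ℕ, Complex.exp (-Complex.I * m * (2 * Real.pi / d) * l)
      = (starRingEnd ℂ) (Complex.exp (Complex.I * m * (2 * Real.pi / d) * l)) := by
    intro l
    rw [← Complex.exp_conj]
    congr 1
    simp only [map_mul, map_div₀, Complex.conj_I, Complex.conj_ofReal,
      Complex.conj_natCast, map_ofNat]
  simp only [hc, ← map_sum, h, map_zero]

noncomputable def Amat (d : ℕ) (p : ℝ) : Matrix (Fin (d + 1)) (Fin (d + 1)) ℂ :=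
  Matrix.of fun j k =>
    if (j : ℕ) = (k : ℕ) then 1 else if (j : ℕ) = 0 ∨ (k : ℕ) = 0 then (p : ℂ) else 0

lemma sum_Hmat (d : ℕ) (p : ℝ) (q : ℕ → ℝ) :
    ∑ l ∈ Finset.Icc 1 d, Hmat d p q l = (d : ℂ) • Amat d p := by
  ext j k
  simp only [Matrix.sum_apply, Matrix.smul_apply, Hmat, Amat, Matrix.of_apply, smul_eq_mul]
  rcases eq_or_ne (j:ℕ) (k:ℕ) with h | h
  · simp [h, Finset.sum_const, Nat.card_Icc]
  · rcases em ((j:ℕ) = 0 ∨ (k:ℕ) = 0) with h0 | h0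
    · simp at h0
      simp [h, h0, Finset.sum_const, Nat.card_Icc]
    · push_neg at h0
      have hk := k.isLt
      have hj := j.isLt
      rcases lt_or_gt_of_ne h with hlt | hgt
      · have hm : 0 < (k:ℕ) - (j:ℕ) := by omega
        have hmd : (k:ℕ) - (j:ℕ) < d := by omega
        rw [if_neg h, if_neg (by tauto)]
        simp only [if_neg h, if_neg (show ¬((j:ℕ) = 0 ∨ (k:ℕ) = 0) by tauto), if_pos hlt]
        rw [← Finset.mul_sum, geom_exp_sum d _ hm hmd, mul_zero, mul_zero]
      · have hm : 0 < (j:ℕ) - (k:ℕ) := by omega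
        have hmd : (j:ℕ) - (k:ℕ) < d := by omega
        rw [if_neg h, if_neg (by tauto)]
        simp only [if_neg h, if_neg (show ¬((j:ℕ) = 0 ∨ (k:ℕ) = 0) by tauto),
          if_neg (not_lt.mpr (le_of_lt hgt))]
        rw [← Finset.mul_sum, geom_exp_sum' d _ hm hmd, mul_zero, mul_zero]

open Matrix

open ComplexOrder in
theorem posSemidef_Hmat_implies (d : ℕ) (hd : 2 ≤ d) (p : ℝ) (q : ℕ → ℝ)
    (hp : |p| ≤ 1) (hq : ∀ r, |q r| ≤ 1)
    (hpos : ∀ l ∈ Finset.Icc 1 d, (Hmat d p q l).PosSemidef) :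
    p ^ 2 ≤ 1 / d := by
  classical
  set v : Fin (d + 1) → ℂ := fun j => if (j : ℕ) = 0 then (-(d * p) : ℂ) else 1 with hv
  have hv0 : v 0 = -(d * p) := by simp [hv]
  have hvs : ∀ j : Fin d, v j.succ = 1 := by
    intro j; simp [hv, Fin.val_succ]
  have hnn : (0:ℂ) ≤ star v ⬝ᵥ ((∑ l ∈ Finset.Icc 1 d, Hmat d p q l) *ᵥ v) := by
    have hmv : (∑ l ∈ Finset.Icc 1 d, Hmat d p q l) *ᵥ v
        = ∑ l ∈ Finset.Icc 1 d, (Hmat d p q l *ᵥ v) := by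
      ext i
      simp only [Matrix.mulVec, dotProduct, Matrix.sum_apply, Finset.sum_apply,
        Finset.sum_mul]
      rw [Finset.sum_comm]
    have hdp : star v ⬝ᵥ (∑ l ∈ Finset.Icc 1 d, (Hmat d p q l *ᵥ v))
        = ∑ l ∈ Finset.Icc 1 d, star v ⬝ᵥ (Hmat d p q l *ᵥ v) := by
      simp only [dotProduct, Finset.sum_apply, Finset.mul_sum]
      rw [Finset.sum_comm]
    rw [hmv, hdp]
    exact Finset.sum_nonneg fun l hl => (hpos l hl).dotProduct_mulVec_nonneg v
  rw [sum_Hmat d p q, Matrix.smul_mulVec, dotProduct_smul] at hnn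
  have hrow0 : (Amat d p *ᵥ v) 0 = 0 := by
    simp only [Matrix.mulVec, dotProduct]
    rw [Fin.sum_univ_succ]
    simp only [Amat, Matrix.of_apply, Fin.val_zero, Fin.val_succ, hv0, hvs]
    simp [Finset.sum_const, Finset.card_univ, nsmul_eq_mul]
  have hrows : ∀ j : Fin d, (Amat d p *ᵥ v) j.succ = 1 - d * p ^ 2 := by
    intro j
    simp only [Matrix.mulVec, dotProduct]
    rw [Fin.sum_univ_succ]
    simp only [Amat, Matrix.of_apply, Fin.val_zero, Fin.val_succ, hv0, hvs]
    have : ∀ k : Fin d,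
        (if (j:ℕ) + 1 = (k:ℕ) + 1 then (1:ℂ)
          else if (j:ℕ) + 1 = 0 ∨ (k:ℕ) + 1 = 0 then (p:ℂ) else 0)
        = if j = k then 1 else 0 := by
      intro k
      by_cases hjk : j = k
      · simp [hjk]
      · rw [if_neg, if_neg, if_neg hjk]
        · omega
        · intro hcontra
          exact hjk (Fin.ext (by omega))
    simp only [mul_one, this]
    rw [Finset.sum_ite_eq (Finset.univ : Finset (Fin d)) j (fun _ => (1:ℂ))]
    simp
    ring
  have hQ : star v ⬝ᵥ (Amat d p *ᵥ v) = (d:ℂ) * (1 - d * p ^ 2) := by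
    simp only [dotProduct, Pi.star_apply]
    rw [Fin.sum_univ_succ]
    simp only [hrow0, hrows, hv0, hvs, mul_zero, star_one, one_mul, zero_add]
    simp [Finset.sum_const, Finset.card_univ, nsmul_eq_mul]
    ring
  rw [hQ] at hnn
  have hcast : (d:ℂ) • ((d:ℂ) * (1 - d * p ^ 2)) = (((d:ℝ)^2 * (1 - d * p ^ 2) : ℝ) : ℂ) := by
    rw [smul_eq_mul]
    push_cast
    ring
  rw [hcast] at hnn
  have hreal : (0:ℝ) ≤ (d:ℝ)^2 * (1 - d * p ^ 2) := by
    exact_mod_cast hnn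
  have hdr : (2:ℝ) ≤ (d:ℝ) := by exact_mod_cast hd
  have hd2 : (0:ℝ) < (d:ℝ)^2 := by positivity
  have h1 : 0 ≤ 1 - (d:ℝ) * p ^ 2 := by nlinarith [hreal, hd2]
  rw [le_div_iff₀ (by linarith)]
  nlinarith [h1]
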